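/- For any positive integers k < n and positive integers n_1, n_2, ..., n_k with n_1 + n_2 + ... + n_k = n, we have k·log₂(k) + n_1·log₂(n_1) + n_2·log₂(n_2) + ... + n_k·log₂(n_k) ≤ n·log₂(n). -/

import Mathlib

/-- Key pointwise bound: for reals `1 ≤ a`, `a ≤ N`, we have
`logb 2 (N - a + 1) ≤ a * logb 2 N - a * logb 2 a`. -/
lemma aux_bernoulli {a N : ℝ} (ha : 1 ≤ a) (haN : a ≤ N) :
    Real.logb 2 (N - a + 1) ≤ a * Real.logb 2 N - a * Real.logb 2 a := by
  have ha0 : 0 < a := lt_of_lt_of_le one_pos ha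
  have hN0 : 0 < N := lt_of_lt_of_le ha0 haN
  have hs : (0:ℝ) ≤ (N - a) / a := div_nonneg (by linarith) ha0.le
  have hbern : 1 + a * ((N - a) / a) ≤ (1 + (N - a) / a) ^ a :=
    one_add_mul_self_le_rpow_one_add (by linarith) ha
  have h1 : 1 + (N - a) / a = N / a := by field_simp; ring
  have h2 : 1 + a * ((N - a) / a) = N - a + 1 := by field_simp; ring
  rw [h1, h2] at hbern
  have hNa : 0 < N / a := div_pos hN0 ha0
  calc Real.logb 2 (N - a + 1) ≤ Real.logb 2 ((N / a) ^ a) :=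
        Real.logb_le_logb_of_le one_lt_two (by linarith) hbern
    _ = a * Real.logb 2 (N / a) := Real.logb_rpow_eq_mul_logb_of_pos hNa
    _ = a * Real.logb 2 N - a * Real.logb 2 a := by
        rw [Real.logb_div hN0.ne' ha0.ne']; ring

/-- For any positive integers `k < n` and positive integers `n₁,…,n_k` summing to `n`,
`k·log₂ k + ∑ nᵢ·log₂ nᵢ ≤ n·log₂ n`. -/
theorem stmt0 (k n : ℕ) (hk : 0 < k) (hkn : k < n) (f : Fin k → ℕ)
    (hf : ∀ i, 0 < f i) (hsum : ∑ i, f i = n) :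
    (k : ℝ) * Real.logb 2 k + ∑ i, (f i : ℝ) * Real.logb 2 (f i) ≤ (n : ℝ) * Real.logb 2 n := by
  have key : ∀ i, Real.logb 2 k ≤ (f i : ℝ) * Real.logb 2 n - (f i : ℝ) * Real.logb 2 (f i) := by
    intro i
    -- `n - f i ≥ k - 1` since the other `k-1` parts are each ≥ 1
    have hle : k - 1 + f i ≤ n := by
      have : ∑ j ∈ Finset.univ.erase i, f j + f i = n := by
        rw [Finset.sum_erase_add _ _ (Finset.mem_univ i)]; exact hsum
      have hcard : k - 1 ≤ ∑ j ∈ Finset.univ.erase i, f j := by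
        have h1 : (Finset.univ.erase i).card = k - 1 := by
          simp [Finset.card_erase_of_mem]
        have h2 := Finset.card_nsmul_le_sum (Finset.univ.erase i) f 1 (fun j _ => hf j)
        simpa [h1] using h2
      omega
    have hfi1 : (1:ℝ) ≤ (f i : ℝ) := by exact_mod_cast hf i
    have hfin : ((f i : ℝ)) ≤ (n : ℝ) := by
      have : f i ≤ n := by omega
      exact_mod_cast this
    have hk' : (k : ℝ) ≤ (n : ℝ) - (f i : ℝ) + 1 := by
      have : k ≤ n - f i + 1 := by omega
      have h2 : (k : ℝ) ≤ ((n - f i + 1 : ℕ) : ℝ) := by exact_mod_cast this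
      have h3 : ((n - f i + 1 : ℕ) : ℝ) = (n : ℝ) - (f i : ℝ) + 1 := by
        have : f i ≤ n := by omega
        push_cast [this]; ring
      linarith [h2, h3.le]
    calc Real.logb 2 k ≤ Real.logb 2 ((n : ℝ) - (f i : ℝ) + 1) :=
          Real.logb_le_logb_of_le one_lt_two (by exact_mod_cast hk) hk'
      _ ≤ (f i : ℝ) * Real.logb 2 n - (f i : ℝ) * Real.logb 2 (f i) :=
          aux_bernoulli hfi1 hfin
  have hsum' : ∑ i, ((f i : ℝ) * Real.logb 2 n - (f i : ℝ) * Real.logb 2 (f i))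
      ≥ (k : ℝ) * Real.logb 2 k := by
    have := Finset.card_nsmul_le_sum Finset.univ
      (fun i => (f i : ℝ) * Real.logb 2 n - (f i : ℝ) * Real.logb 2 (f i))
      (Real.logb 2 k) (fun i _ => key i)
    simpa [nsmul_eq_mul, mul_comm] using this
  have hexp : ∑ i, ((f i : ℝ) * Real.logb 2 n - (f i : ℝ) * Real.logb 2 (f i))
      = (n : ℝ) * Real.logb 2 n - ∑ i, (f i : ℝ) * Real.logb 2 (f i) := by
    rw [Finset.sum_sub_distrib, ← Finset.sum_mul]
    congr 2
    exact_mod_cast congrArg (Nat.cast : ℕ → ℝ) hsum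
  rw [hexp] at hsum'
  linarith
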